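/- Let A, B, D, E ∈ ℂ satisfy Im(A·conj(D) + B·conj(E)) = 0, and define Φ : ℝ³ → ℂ³ by Φ(y₁,y₂,t) = (Φ₁, Φ₂, Φ₃) where Φ₁ = y₁² e^{it} + y₁(D e^{it/2} + E e^{−it/2}) + y₂(A e^{it/2} + B e^{−it/2}) − (1/6) A conj(B) e^{2it} + (|A|² + (1/3)|B|²) e^{it} − i(A² + conj(A)B) t − (2/3) A B e^{−it} − (1/6) B² e^{−2it}; Φ₂ = −i y₁² e^{−it} + i y₁(−conj(D) e^{−it/2} + conj(E) e^{it/2}) + i y₂(conj(A) e^{−it/2} − conj(B) e^{it/2}) + (i/6) conj(B)² e^{2it} − (2i/3) conj(A) conj(B) e^{it} + (conj(A)² − A conj(B)) t − i(|A|² + (1/3)|B|²) e^{−it} − (i/6) conj(A) B e^{−2it}; Φ₃ = y₁ y₂ + y₁(2A e^{−it/2} − 2 conj(A) e^{it/2} − (2/3) B e^{−3it/2} − (2/3) conj(B) e^{3it/2}) − ½(A conj(E) + conj(B) D) e^{it} − i Re(A conj(D) − B conj(E)) t − ½(conj(A) E + B conj(D)) e^{−it}. Then at every point of ℝ³, ω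 vanishes on each pair of partial derivatives of Φ and Im Ω(∂Φ/∂y₁, ∂Φ/∂y₂, ∂Φ/∂t) = 0; that is, N = Φ(ℝ³) is a special Lagrangian 3-fold in ℂ³ wherever it is nonsingular. -/

import Mathlib

set_option maxHeartbeats 4000000

noncomputable section

open Complex ComplexConjugate

/-- ℂ³ as triples of complex numbers. -/
abbrev C3 := ℂ × ℂ × ℂ

/-- The standard Kähler form ω(u,v) = Σ Im(conj(u_j)·v_j). -/
def omega3 (u v : C3) : ℝ :=
  (conj u.1 * v.1).im + (conj u.2.1 * v.2.1).im + (conj u.2.2 * v.2.2).im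

/-- The holomorphic volume form Ω(u,v,w): determinant of the matrix with columns u,v,w. -/
def Omega3 (u v w : C3) : ℂ :=
  u.1 * (v.2.1 * w.2.2 - v.2.2 * w.2.1)
  - v.1 * (u.2.1 * w.2.2 - u.2.2 * w.2.1)
  + w.1 * (u.2.1 * v.2.2 - u.2.2 * v.2.1)

/-- First component of Φ. -/
def Phi1 (A B D E : ℂ) (y₁ y₂ t : ℝ) : ℂ :=
  (y₁:ℂ)^2 * Complex.exp (Complex.I * t)
  + (y₁:ℂ) * (D * Complex.exp (Complex.I * t / 2) + E * Complex.exp (-(Complex.I * t / 2)))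
  + (y₂:ℂ) * (A * Complex.exp (Complex.I * t / 2) + B * Complex.exp (-(Complex.I * t / 2)))
  - (1/6 : ℂ) * A * conj B * Complex.exp (2 * Complex.I * t)
  + ((Complex.normSq A : ℂ) + (1/3 : ℂ) * (Complex.normSq B : ℂ)) * Complex.exp (Complex.I * t)
  - Complex.I * (A^2 + conj A * B) * (t:ℂ)
  - (2/3 : ℂ) * A * B * Complex.exp (-(Complex.I * t))
  - (1/6 : ℂ) * B^2 * Complex.exp (-(2 * Complex.I * t))

/-- Second component of Φ. -/
def Phi2 (A B D E : ℂ) (y₁ y₂ t : ℝ) : ℂ :=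
  -Complex.I * (y₁:ℂ)^2 * Complex.exp (-(Complex.I * t))
  + Complex.I * (y₁:ℂ) * (-conj D * Complex.exp (-(Complex.I * t / 2))
      + conj E * Complex.exp (Complex.I * t / 2))
  + Complex.I * (y₂:ℂ) * (conj A * Complex.exp (-(Complex.I * t / 2))
      - conj B * Complex.exp (Complex.I * t / 2))
  + (Complex.I / 6) * (conj B)^2 * Complex.exp (2 * Complex.I * t)
  - (2 * Complex.I / 3) * conj A * conj B * Complex.exp (Complex.I * t)
  + ((conj A)^2 - A * conj B) * (t:ℂ)
  - Complex.I * ((Complex.normSq A : ℂ) + (1/3 : ℂ) * (Complex.normSq B : ℂ))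
      * Complex.exp (-(Complex.I * t))
  - (Complex.I / 6) * conj A * B * Complex.exp (-(2 * Complex.I * t))

/-- Third component of Φ. -/
def Phi3 (A B D E : ℂ) (y₁ y₂ t : ℝ) : ℂ :=
  (y₁:ℂ) * (y₂:ℂ)
  + (y₁:ℂ) * (2 * A * Complex.exp (-(Complex.I * t / 2))
      - 2 * conj A * Complex.exp (Complex.I * t / 2)
      - (2/3 : ℂ) * B * Complex.exp (-(3 * Complex.I * t / 2))
      - (2/3 : ℂ) * conj B * Complex.exp (3 * Complex.I * t / 2))
  - (1/2 : ℂ) * (A * conj E + conj B * D) * Complex.exp (Complex.I * t)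
  - Complex.I * (((A * conj D - B * conj E).re : ℝ) : ℂ) * (t:ℂ)
  - (1/2 : ℂ) * (conj A * E + B * conj D) * Complex.exp (-(Complex.I * t))

/-- The map Φ of Theorem 8.5. -/
def Phi8 (A B D E : ℂ) (y₁ y₂ t : ℝ) : C3 :=
  (Phi1 A B D E y₁ y₂ t, Phi2 A B D E y₁ y₂ t, Phi3 A B D E y₁ y₂ t)

/-! ### Auxiliary derivative lemmas -/

private lemma hasDerivAt_ofRealC (t : ℝ) : HasDerivAt (fun s : ℝ => (s : ℂ)) 1 t :=
  Complex.ofRealCLM.hasDerivAt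

private lemma hexp (a : ℂ) (t : ℝ) :
    HasDerivAt (fun s : ℝ => Complex.exp (a * s)) (a * Complex.exp (a * t)) t := by
  simpa [mul_comm] using (((hasDerivAt_ofRealC t).const_mul a).cexp)

section Derivs

variable (A B D E : ℂ) (y₁ y₂ t : ℝ)

private lemma dU1 :
    HasDerivAt (fun s : ℝ => Phi1 A B D E s y₂ t)
      (2*(y₁:ℂ)*Complex.exp (Complex.I * t)
        + D * Complex.exp ((Complex.I/2) * t) + E * Complex.exp ((-(Complex.I/2)) * t)) y₁ := by
  have hfun : (fun s : ℝ => Phi1 A B D E s y₂ t)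
      = (fun s : ℝ => (s:ℂ) * (s:ℂ) * Complex.exp (Complex.I * t)
          + (s:ℂ) * (D * Complex.exp ((Complex.I/2) * t) + E * Complex.exp ((-(Complex.I/2)) * t))
          + Phi1 A B D E 0 y₂ t) := by
    funext s
    unfold Phi1
    rw [show Complex.I * (t:ℂ) / 2 = (Complex.I/2) * t from by ring,
        show -((Complex.I/2) * (t:ℂ)) = (-(Complex.I/2)) * t from by ring]
    push_cast
    ring
  rw [hfun]
  have H := ((((hasDerivAt_ofRealC y₁).mul (hasDerivAt_ofRealC y₁)).mul_const (Complex.exp (Complex.I * t))).add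
    ((hasDerivAt_ofRealC y₁).mul_const
      (D * Complex.exp ((Complex.I/2) * t) + E * Complex.exp ((-(Complex.I/2)) * t)))).add_const
      (Phi1 A B D E 0 y₂ t)
  exact H.congr_deriv (by ring)

private lemma dU2 :
    HasDerivAt (fun s : ℝ => Phi2 A B D E s y₂ t)
      (-2*Complex.I*(y₁:ℂ)*Complex.exp ((-Complex.I) * t)
        - Complex.I * conj D * Complex.exp ((-(Complex.I/2)) * t)
        + Complex.I * conj E * Complex.exp ((Complex.I/2) * t)) y₁ := by
  have hfun : (fun s : ℝ => Phi2 A B D E s y₂ t)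
      = (fun s : ℝ => (s:ℂ) * (s:ℂ) * (-Complex.I * Complex.exp ((-Complex.I) * t))
          + (s:ℂ) * (- Complex.I * conj D * Complex.exp ((-(Complex.I/2)) * t)
              + Complex.I * conj E * Complex.exp ((Complex.I/2) * t))
          + Phi2 A B D E 0 y₂ t) := by
    funext s
    unfold Phi2
    rw [show Complex.I * (t:ℂ) / 2 = (Complex.I/2) * t from by ring,
        show -((Complex.I/2) * (t:ℂ)) = (-(Complex.I/2)) * t from by ring,
        show -(Complex.I * (t:ℂ)) = (-Complex.I) * t from by ring]
    push_cast
    ring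
  rw [hfun]
  have H := ((((hasDerivAt_ofRealC y₁).mul (hasDerivAt_ofRealC y₁)).mul_const
      (-Complex.I * Complex.exp ((-Complex.I) * t))).add
    ((hasDerivAt_ofRealC y₁).mul_const
      (- Complex.I * conj D * Complex.exp ((-(Complex.I/2)) * t)
        + Complex.I * conj E * Complex.exp ((Complex.I/2) * t)))).add_const
      (Phi2 A B D E 0 y₂ t)
  exact H.congr_deriv (by ring)

private lemma dU3 :
    HasDerivAt (fun s : ℝ => Phi3 A B D E s y₂ t)
      ((y₂:ℂ) + 2*A*Complex.exp ((-(Complex.I/2)) * t) - 2*conj A*Complex.exp ((Complex.I/2) * t)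
        - (2/3 : ℂ)*B*Complex.exp ((-(3*Complex.I/2)) * t)
        - (2/3 : ℂ)*conj B*Complex.exp ((3*Complex.I/2) * t)) y₁ := by
  have hfun : (fun s : ℝ => Phi3 A B D E s y₂ t)
      = (fun s : ℝ => (s:ℂ) * ((y₂:ℂ) + 2*A*Complex.exp ((-(Complex.I/2)) * t)
          - 2*conj A*Complex.exp ((Complex.I/2) * t)
          - (2/3 : ℂ)*B*Complex.exp ((-(3*Complex.I/2)) * t)
          - (2/3 : ℂ)*conj B*Complex.exp ((3*Complex.I/2) * t))
          + Phi3 A B D E 0 y₂ t) := by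
    funext s
    unfold Phi3
    rw [show Complex.I * (t:ℂ) / 2 = (Complex.I/2) * t from by ring,
        show -((Complex.I/2) * (t:ℂ)) = (-(Complex.I/2)) * t from by ring,
        show 3 * Complex.I * (t:ℂ) / 2 = (3*Complex.I/2) * t from by ring,
        show -((3*Complex.I/2) * (t:ℂ)) = (-(3*Complex.I/2)) * t from by ring]
    push_cast
    ring
  rw [hfun]
  have H := ((hasDerivAt_ofRealC y₁).mul_const
      ((y₂:ℂ) + 2*A*Complex.exp ((-(Complex.I/2)) * t)
        - 2*conj A*Complex.exp ((Complex.I/2) * t)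
        - (2/3 : ℂ)*B*Complex.exp ((-(3*Complex.I/2)) * t)
        - (2/3 : ℂ)*conj B*Complex.exp ((3*Complex.I/2) * t))).add_const (Phi3 A B D E 0 y₂ t)
  exact H.congr_deriv (by ring)

private lemma dV1 :
    HasDerivAt (fun s : ℝ => Phi1 A B D E y₁ s t)
      (A * Complex.exp ((Complex.I/2) * t) + B * Complex.exp ((-(Complex.I/2)) * t)) y₂ := by
  have hfun : (fun s : ℝ => Phi1 A B D E y₁ s t)
      = (fun s : ℝ => (s:ℂ) * (A * Complex.exp ((Complex.I/2) * t)
          + B * Complex.exp ((-(Complex.I/2)) * t)) + Phi1 A B D E y₁ 0 t) := by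
    funext s
    unfold Phi1
    rw [show Complex.I * (t:ℂ) / 2 = (Complex.I/2) * t from by ring,
        show -((Complex.I/2) * (t:ℂ)) = (-(Complex.I/2)) * t from by ring]
    push_cast
    ring
  rw [hfun]
  have H := ((hasDerivAt_ofRealC y₂).mul_const
      (A * Complex.exp ((Complex.I/2) * t)
        + B * Complex.exp ((-(Complex.I/2)) * t))).add_const (Phi1 A B D E y₁ 0 t)
  exact H.congr_deriv (by ring)

private lemma dV2 :
    HasDerivAt (fun s : ℝ => Phi2 A B D E y₁ s t)
      (Complex.I * conj A * Complex.exp ((-(Complex.I/2)) * t)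
        - Complex.I * conj B * Complex.exp ((Complex.I/2) * t)) y₂ := by
  have hfun : (fun s : ℝ => Phi2 A B D E y₁ s t)
      = (fun s : ℝ => (s:ℂ) * (Complex.I * conj A * Complex.exp ((-(Complex.I/2)) * t)
          - Complex.I * conj B * Complex.exp ((Complex.I/2) * t)) + Phi2 A B D E y₁ 0 t) := by
    funext s
    unfold Phi2
    rw [show Complex.I * (t:ℂ) / 2 = (Complex.I/2) * t from by ring,
        show -((Complex.I/2) * (t:ℂ)) = (-(Complex.I/2)) * t from by ring]
    push_cast
    ring
  rw [hfun]
  have H := ((hasDerivAt_ofRealC y₂).mul_const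
      (Complex.I * conj A * Complex.exp ((-(Complex.I/2)) * t)
        - Complex.I * conj B * Complex.exp ((Complex.I/2) * t))).add_const (Phi2 A B D E y₁ 0 t)
  exact H.congr_deriv (by ring)

private lemma dV3 :
    HasDerivAt (fun s : ℝ => Phi3 A B D E y₁ s t) ((y₁:ℂ)) y₂ := by
  have hfun : (fun s : ℝ => Phi3 A B D E y₁ s t)
      = (fun s : ℝ => (s:ℂ) * (y₁:ℂ) + Phi3 A B D E y₁ 0 t) := by
    funext s
    unfold Phi3
    push_cast
    ring
  rw [hfun]
  have H := ((hasDerivAt_ofRealC y₂).mul_const ((y₁:ℂ))).add_const (Phi3 A B D E y₁ 0 t)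
  exact H.congr_deriv (by ring)

private lemma dW1 :
    HasDerivAt (fun s : ℝ => Phi1 A B D E y₁ y₂ s)
      (Complex.I*(y₁:ℂ)^2*Complex.exp (Complex.I * t)
        + (Complex.I/2)*(y₁:ℂ)*(D*Complex.exp ((Complex.I/2) * t)
            - E*Complex.exp ((-(Complex.I/2)) * t))
        + (Complex.I/2)*(y₂:ℂ)*(A*Complex.exp ((Complex.I/2) * t)
            - B*Complex.exp ((-(Complex.I/2)) * t))
        - (Complex.I/3)*A*conj B*Complex.exp ((2*Complex.I) * t)
        + Complex.I*((Complex.normSq A : ℂ) + (1/3 : ℂ)*(Complex.normSq B : ℂ))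
            *Complex.exp (Complex.I * t)
        - Complex.I*(A^2 + conj A*B)
        + (2*Complex.I/3)*A*B*Complex.exp ((-Complex.I) * t)
        + (Complex.I/3)*B^2*Complex.exp ((-(2*Complex.I)) * t)) t := by
  have hfun : (fun s : ℝ => Phi1 A B D E y₁ y₂ s)
      = (fun s : ℝ =>
          ((y₁:ℂ)^2 + (Complex.normSq A : ℂ) + (1/3 : ℂ)*(Complex.normSq B : ℂ))
              * Complex.exp (Complex.I * s)
          + ((y₁:ℂ)*D + (y₂:ℂ)*A) * Complex.exp ((Complex.I/2) * s)
          + ((y₁:ℂ)*E + (y₂:ℂ)*B) * Complex.exp ((-(Complex.I/2)) * s)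
          + (-(1/6 : ℂ)*A*conj B) * Complex.exp ((2*Complex.I) * s)
          + (-(2/3 : ℂ)*A*B) * Complex.exp ((-Complex.I) * s)
          + (-(1/6 : ℂ)*B^2) * Complex.exp ((-(2*Complex.I)) * s)
          + (-Complex.I*(A^2 + conj A*B)) * (s:ℂ)) := by
    funext s
    unfold Phi1
    rw [show Complex.I * (s:ℂ) / 2 = (Complex.I/2) * s from by ring,
        show -((Complex.I/2) * (s:ℂ)) = (-(Complex.I/2)) * s from by ring,
        show -(Complex.I * (s:ℂ)) = (-Complex.I) * s from by ring,
        show -(2 * Complex.I * (s:ℂ)) = (-(2*Complex.I)) * s from by ring,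
        show 2 * Complex.I * (s:ℂ) = (2*Complex.I) * s from by ring]
    ring
  rw [hfun]
  have H := (((((((hexp Complex.I t).const_mul
      ((y₁:ℂ)^2 + (Complex.normSq A : ℂ) + (1/3 : ℂ)*(Complex.normSq B : ℂ))).add
    ((hexp (Complex.I/2) t).const_mul ((y₁:ℂ)*D + (y₂:ℂ)*A))).add
    ((hexp (-(Complex.I/2)) t).const_mul ((y₁:ℂ)*E + (y₂:ℂ)*B))).add
    ((hexp (2*Complex.I) t).const_mul (-(1/6 : ℂ)*A*conj B))).add
    ((hexp (-Complex.I) t).const_mul (-(2/3 : ℂ)*A*B))).add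
    ((hexp (-(2*Complex.I)) t).const_mul (-(1/6 : ℂ)*B^2))).add
    ((hasDerivAt_ofRealC t).const_mul (-Complex.I*(A^2 + conj A*B)))
  exact H.congr_deriv (by ring)

private lemma dW2 :
    HasDerivAt (fun s : ℝ => Phi2 A B D E y₁ y₂ s)
      (-(y₁:ℂ)^2*Complex.exp ((-Complex.I) * t)
        - ((Complex.normSq A : ℂ) + (1/3 : ℂ)*(Complex.normSq B : ℂ))
            *Complex.exp ((-Complex.I) * t)
        + (1/2 : ℂ)*((y₂:ℂ)*conj A - (y₁:ℂ)*conj D)*Complex.exp ((-(Complex.I/2)) * t)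
        + (1/2 : ℂ)*((y₂:ℂ)*conj B - (y₁:ℂ)*conj E)*Complex.exp ((Complex.I/2) * t)
        - (1/3 : ℂ)*(conj B)^2*Complex.exp ((2*Complex.I) * t)
        + (2/3 : ℂ)*conj A*conj B*Complex.exp (Complex.I * t)
        + ((conj A)^2 - A*conj B)
        - (1/3 : ℂ)*conj A*B*Complex.exp ((-(2*Complex.I)) * t)) t := by
  have hfun : (fun s : ℝ => Phi2 A B D E y₁ y₂ s)
      = (fun s : ℝ =>
          (-Complex.I*(y₁:ℂ)^2
            - Complex.I*((Complex.normSq A : ℂ) + (1/3 : ℂ)*(Complex.normSq B : ℂ)))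
              * Complex.exp ((-Complex.I) * s)
          + (-Complex.I*(y₁:ℂ)*conj D + Complex.I*(y₂:ℂ)*conj A)
              * Complex.exp ((-(Complex.I/2)) * s)
          + (Complex.I*(y₁:ℂ)*conj E - Complex.I*(y₂:ℂ)*conj B)
              * Complex.exp ((Complex.I/2) * s)
          + ((Complex.I/6)*(conj B)^2) * Complex.exp ((2*Complex.I) * s)
          + (-(2*Complex.I/3)*conj A*conj B) * Complex.exp (Complex.I * s)
          + (-(Complex.I/6)*conj A*B) * Complex.exp ((-(2*Complex.I)) * s)
          + ((conj A)^2 - A*conj B) * (s:ℂ)) := by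
    funext s
    unfold Phi2
    rw [show Complex.I * (s:ℂ) / 2 = (Complex.I/2) * s from by ring,
        show -((Complex.I/2) * (s:ℂ)) = (-(Complex.I/2)) * s from by ring,
        show -(Complex.I * (s:ℂ)) = (-Complex.I) * s from by ring,
        show -(2 * Complex.I * (s:ℂ)) = (-(2*Complex.I)) * s from by ring,
        show 2 * Complex.I * (s:ℂ) = (2*Complex.I) * s from by ring]
    ring
  rw [hfun]
  have H := (((((((hexp (-Complex.I) t).const_mul
      (-Complex.I*(y₁:ℂ)^2
        - Complex.I*((Complex.normSq A : ℂ) + (1/3 : ℂ)*(Complex.normSq B : ℂ)))).add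
    ((hexp (-(Complex.I/2)) t).const_mul
      (-Complex.I*(y₁:ℂ)*conj D + Complex.I*(y₂:ℂ)*conj A))).add
    ((hexp ((Complex.I/2)) t).const_mul
      (Complex.I*(y₁:ℂ)*conj E - Complex.I*(y₂:ℂ)*conj B))).add
    ((hexp (2*Complex.I) t).const_mul ((Complex.I/6)*(conj B)^2))).add
    ((hexp Complex.I t).const_mul (-(2*Complex.I/3)*conj A*conj B))).add
    ((hexp (-(2*Complex.I)) t).const_mul (-(Complex.I/6)*conj A*B))).add
    ((hasDerivAt_ofRealC t).const_mul ((conj A)^2 - A*conj B))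
  refine H.congr_deriv ?_
  have h1 : (-Complex.I) * (-Complex.I) = -1 := by
    rw [neg_mul_neg, Complex.I_mul_I]
  have h2 : Complex.I * Complex.I = -1 := Complex.I_mul_I
  field_simp
  ring_nf
  rw [Complex.I_sq]
  ring

private lemma dW3 :
    HasDerivAt (fun s : ℝ => Phi3 A B D E y₁ y₂ s)
      (-Complex.I*A*(y₁:ℂ)*Complex.exp ((-(Complex.I/2)) * t)
        - Complex.I*conj A*(y₁:ℂ)*Complex.exp ((Complex.I/2) * t)
        + Complex.I*B*(y₁:ℂ)*Complex.exp ((-(3*Complex.I/2)) * t)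
        - Complex.I*conj B*(y₁:ℂ)*Complex.exp ((3*Complex.I/2) * t)
        - (Complex.I/2)*(A*conj E + conj B*D)*Complex.exp (Complex.I * t)
        - Complex.I*(((A * conj D - B * conj E).re : ℝ) : ℂ)
        + (Complex.I/2)*(conj A*E + B*conj D)*Complex.exp ((-Complex.I) * t)) t := by
  have hfun : (fun s : ℝ => Phi3 A B D E y₁ y₂ s)
      = (fun s : ℝ =>
          (2*A*(y₁:ℂ)) * Complex.exp ((-(Complex.I/2)) * s)
          + (-2*conj A*(y₁:ℂ)) * Complex.exp ((Complex.I/2) * s)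
          + (-(2/3 : ℂ)*B*(y₁:ℂ)) * Complex.exp ((-(3*Complex.I/2)) * s)
          + (-(2/3 : ℂ)*conj B*(y₁:ℂ)) * Complex.exp ((3*Complex.I/2) * s)
          + (-(1/2 : ℂ)*(A*conj E + conj B*D)) * Complex.exp (Complex.I * s)
          + (-(1/2 : ℂ)*(conj A*E + B*conj D)) * Complex.exp ((-Complex.I) * s)
          + (-Complex.I*(((A * conj D - B * conj E).re : ℝ) : ℂ)) * (s:ℂ)
          + (y₁:ℂ)*(y₂:ℂ)) := by
    funext s
    unfold Phi3
    rw [show Complex.I * (s:ℂ) / 2 = (Complex.I/2) * s from by ring,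
        show -((Complex.I/2) * (s:ℂ)) = (-(Complex.I/2)) * s from by ring,
        show -(Complex.I * (s:ℂ)) = (-Complex.I) * s from by ring,
        show 3 * Complex.I * (s:ℂ) / 2 = (3*Complex.I/2) * s from by ring,
        show -((3*Complex.I/2) * (s:ℂ)) = (-(3*Complex.I/2)) * s from by ring]
    ring
  rw [hfun]
  have H := ((((((((hexp (-(Complex.I/2)) t).const_mul (2*A*(y₁:ℂ))).add
    ((hexp ((Complex.I/2)) t).const_mul (-2*conj A*(y₁:ℂ)))).add
    ((hexp (-(3*Complex.I/2)) t).const_mul (-(2/3 : ℂ)*B*(y₁:ℂ)))).add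
    ((hexp ((3*Complex.I/2)) t).const_mul (-(2/3 : ℂ)*conj B*(y₁:ℂ)))).add
    ((hexp Complex.I t).const_mul (-(1/2 : ℂ)*(A*conj E + conj B*D)))).add
    ((hexp (-Complex.I) t).const_mul (-(1/2 : ℂ)*(conj A*E + B*conj D)))).add
    ((hasDerivAt_ofRealC t).const_mul
      (-Complex.I*(((A * conj D - B * conj E).re : ℝ) : ℂ)))).add_const ((y₁:ℂ)*(y₂:ℂ))
  exact H.congr_deriv (by ring)

end Derivs

theorem statement_8
    (A B D E : ℂ) (h : (A * conj D + B * conj E).im = 0) :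
    ∀ y₁ y₂ t : ℝ,
      omega3 (deriv (fun s => Phi8 A B D E s y₂ t) y₁)
             (deriv (fun s => Phi8 A B D E y₁ s t) y₂) = 0 ∧
      omega3 (deriv (fun s => Phi8 A B D E s y₂ t) y₁)
             (deriv (fun s => Phi8 A B D E y₁ y₂ s) t) = 0 ∧
      omega3 (deriv (fun s => Phi8 A B D E y₁ s t) y₂)
             (deriv (fun s => Phi8 A B D E y₁ y₂ s) t) = 0 ∧
      (Omega3 (deriv (fun s => Phi8 A B D E s y₂ t) y₁)
              (deriv (fun s => Phi8 A B D E y₁ s t) y₂)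
              (deriv (fun s => Phi8 A B D E y₁ y₂ s) t)).im = 0 := by
  intro y₁ y₂ t
  have h' : conj A * D + conj B * E = A * conj D + B * conj E := by
    have := Complex.conj_eq_iff_im.mpr h
    simpa [map_add, map_mul] using this
  have HU : HasDerivAt (fun s => Phi8 A B D E s y₂ t) _ y₁ :=
    HasDerivAt.prodMk (dU1 A B D E y₁ y₂ t) (HasDerivAt.prodMk (dU2 A B D E y₁ y₂ t) (dU3 A B D E y₁ y₂ t))
  have HV : HasDerivAt (fun s => Phi8 A B D E y₁ s t) _ y₂ :=
    HasDerivAt.prodMk (dV1 A B D E y₁ y₂ t) (HasDerivAt.prodMk (dV2 A B D E y₁ y₂ t) (dV3 A B D E y₁ y₂ t))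
  have HW : HasDerivAt (fun s => Phi8 A B D E y₁ y₂ s) _ t :=
    HasDerivAt.prodMk (dW1 A B D E y₁ y₂ t) (HasDerivAt.prodMk (dW2 A B D E y₁ y₂ t) (dW3 A B D E y₁ y₂ t))
  rw [HU.deriv, HV.deriv, HW.deriv]
  set c : ℂ := Complex.exp ((Complex.I/2) * (t:ℂ)) with hc_def
  have e1 : Complex.exp ((-(Complex.I/2)) * (t:ℂ)) = conj c := by
    rw [hc_def, ← Complex.exp_conj]
    congr 1
    simp [map_mul, map_div₀, Complex.conj_I, Complex.conj_ofReal, map_ofNat]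
    ring
  have e2 : Complex.exp (Complex.I * (t:ℂ)) = c^2 := by
    rw [hc_def, ← Complex.exp_nat_mul]; congr 1; push_cast; ring
  have e3 : Complex.exp ((2*Complex.I) * (t:ℂ)) = c^4 := by
    rw [hc_def, ← Complex.exp_nat_mul]; congr 1; push_cast; ring
  have e6 : Complex.exp ((3*Complex.I/2) * (t:ℂ)) = c^3 := by
    rw [hc_def, ← Complex.exp_nat_mul]; congr 1; push_cast; ring
  have e4 : Complex.exp ((-Complex.I) * (t:ℂ)) = (conj c)^2 := by
    rw [← e1, ← Complex.exp_nat_mul]; congr 1; push_cast; ring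
  have e5 : Complex.exp ((-(2*Complex.I)) * (t:ℂ)) = (conj c)^4 := by
    rw [← e1, ← Complex.exp_nat_mul]; congr 1; push_cast; ring
  have e7 : Complex.exp ((-(3*Complex.I/2)) * (t:ℂ)) = (conj c)^3 := by
    rw [← e1, ← Complex.exp_nat_mul]; congr 1; push_cast; ring
  have hzero : (Complex.I/2*(t:ℂ)) + conj (Complex.I/2*(t:ℂ)) = 0 := by
    simp [map_mul, map_div₀, Complex.conj_I, Complex.conj_ofReal, map_ofNat]
    ring
  have hcd : c * conj c = 1 := by
    rw [hc_def, ← Complex.exp_conj, ← Complex.exp_add, hzero, Complex.exp_zero]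
  have hre : (((A * conj D - B * conj E).re : ℝ) : ℂ)
      = (A * conj D - B * conj E + conj (A * conj D - B * conj E))/2 := by
    rw [Complex.add_conj]; push_cast; ring
  simp only [e1, e2, e3, e4, e5, e6, e7, hre]
  simp only [omega3, Omega3, ← Complex.mul_conj]
  refine ⟨?_, ?_, ?_, ?_⟩
  · rw [← Complex.add_im, ← Complex.add_im, ← Complex.conj_eq_iff_im]
    simp only [map_add, map_sub, map_mul, map_neg, map_pow, map_inv₀, map_div₀, map_one,
      map_ofNat, Complex.conj_conj, Complex.conj_I, Complex.conj_ofReal]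
    linear_combination ((2:ℂ)*(conj B)*(y₁:ℂ)*c^3 + ((-1):ℂ)*(conj B)*E*c*(conj c) + (1:ℂ)*(conj B)*D*c^2 + ((-2):ℂ)*B*(y₁:ℂ)*(conj c)^3 + (1:ℂ)*B*(conj E)*c*(conj c) + ((-1):ℂ)*B*(conj D)*(conj c)^2 + ((-2):ℂ)*(conj A)*(y₁:ℂ)*c^2*(conj c) + (1:ℂ)*(conj A)*E*(conj c)^2 + ((-1):ℂ)*(conj A)*D*c*(conj c) + (2:ℂ)*A*(y₁:ℂ)*c*(conj c)^2 + ((-1):ℂ)*A*(conj E)*c^2 + (1:ℂ)*A*(conj D)*c*(conj c)) * Complex.I_sq + ((2:ℂ)*(conj B)*E + ((-2):ℂ)*B*(conj E) + (4:ℂ)*(conj A)*(y₁:ℂ)*c + (2:ℂ)*(conj A)*D + ((-4):ℂ)*A*(y₁:ℂ)*(conj c) + ((-2):ℂ)*A*(conj D)) * hcd + (2:ℂ) * h'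
  · rw [← Complex.add_im, ← Complex.add_im, ← Complex.conj_eq_iff_im]
    simp only [map_add, map_sub, map_mul, map_neg, map_pow, map_inv₀, map_div₀, map_one,
      map_ofNat, Complex.conj_conj, Complex.conj_I, Complex.conj_ofReal]
    linear_combination ((1:ℂ)*(conj B)*E*(y₂:ℂ)*Complex.I + (((-2):ℂ)/3)*(conj B)^2*E*c^3*Complex.I + (1:ℂ)*B*(conj E)*(y₂:ℂ)*Complex.I + (((-2):ℂ)/3)*B^2*(conj E)*(conj c)^3*Complex.I + ((-2):ℂ)*(conj A)*(y₁:ℂ)*(y₂:ℂ)*c*Complex.I + ((-1):ℂ)*(conj A)*D*(y₂:ℂ)*Complex.I + ((-4):ℂ)*(conj A)*B*(y₁:ℂ)*(conj c)^2*Complex.I + ((4:ℂ)/3)*(conj A)*B*(y₁:ℂ)*c*(conj c)^3*Complex.I + ((-2):ℂ)*(conj A)*B*(conj D)*(conj c)*Complex.I + ((2:ℂ)/3)*(conj A)*B*D*(conj c)^3*Complex.I + ((-2):ℂ)*(conj A)^2*E*(conj c)*Complex.I + ((-2):ℂ)*A*(y₁:ℂ)*(y₂:ℂ)*(conj c)*Complex.I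 + ((-1):ℂ)*A*(conj D)*(y₂:ℂ)*Complex.I + ((-4):ℂ)*A*(conj B)*(y₁:ℂ)*c^2*Complex.I + ((4:ℂ)/3)*A*(conj B)*(y₁:ℂ)*c^3*(conj c)*Complex.I + ((2:ℂ)/3)*A*(conj B)*(conj D)*c^3*Complex.I + ((-2):ℂ)*A*(conj B)*D*c*Complex.I + ((-2):ℂ)*A^2*(conj E)*c*Complex.I) * hcd
  · rw [← Complex.add_im, ← Complex.add_im, ← Complex.conj_eq_iff_im]
    simp only [map_add, map_sub, map_mul, map_neg, map_pow, map_inv₀, map_div₀, map_one,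
      map_ofNat, Complex.conj_conj, Complex.conj_I, Complex.conj_ofReal]
    linear_combination ((1:ℂ)*(conj B)*E*(y₁:ℂ)*Complex.I + (1:ℂ)*B*(conj E)*(y₁:ℂ)*Complex.I + ((-2):ℂ)*(conj A)*(y₁:ℂ)^2*c*Complex.I + ((-1):ℂ)*(conj A)*D*(y₁:ℂ)*Complex.I + ((-2):ℂ)*(conj A)*B*(conj B)*c*Complex.I + ((-2):ℂ)*A*(y₁:ℂ)^2*(conj c)*Complex.I + ((-1):ℂ)*A*(conj D)*(y₁:ℂ)*Complex.I + ((-2):ℂ)*A*B*(conj B)*(conj c)*Complex.I + ((-2):ℂ)*A*(conj A)^2*c*Complex.I + ((-2):ℂ)*A^2*(conj A)*(conj c)*Complex.I) * hcd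
  · rw [← Complex.conj_eq_iff_im]
    simp only [map_add, map_sub, map_mul, map_neg, map_pow, map_inv₀, map_div₀, map_one,
      map_ofNat, Complex.conj_conj, Complex.conj_I, Complex.conj_ofReal]
    linear_combination ((2:ℂ)*(conj B)^2*E*(y₁:ℂ)*c^3 + ((-2):ℂ)*(conj B)^2*E*(y₁:ℂ)*c^4*(conj c) + (1:ℂ)*(conj B)^2*D*E*c^2 + ((-1):ℂ)*(conj B)^2*D*E*c^3*(conj c) + ((5:ℂ)/3)*B*(conj B)*(conj E)*(y₁:ℂ)*c^3 + (((-5):ℂ)/3)*B*(conj B)*(conj E)*(y₁:ℂ)*c^4*(conj c) + (((-5):ℂ)/3)*B*(conj B)*E*(y₁:ℂ)*(conj c)^3 + ((5:ℂ)/3)*B*(conj B)*E*(y₁:ℂ)*c*(conj c)^4 + ((1:ℂ)/3)*B*(conj B)*(conj D)*(y₁:ℂ)*c^2*(conj c) + (((-1):ℂ)/3)*B*(conj B)*(conj D)*(y₁:ℂ)*c^3*(conj c)^2 + ((-1):ℂ)*B*(conj B)*(conj D)*E*(conj c)^2 + (1:ℂ)*B*(conj B)*(conj D)*E*c*(conj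 c)^3 + (((-1):ℂ)/3)*B*(conj B)*D*(y₁:ℂ)*c*(conj c)^2 + ((1:ℂ)/3)*B*(conj B)*D*(y₁:ℂ)*c^2*(conj c)^3 + (1:ℂ)*B*(conj B)*D*(conj E)*c^2 + ((-1):ℂ)*B*(conj B)*D*(conj E)*c^3*(conj c) + (((-1):ℂ)/3)*B*(conj B)^2*(y₂:ℂ)*c^3 + ((1:ℂ)/3)*B*(conj B)^2*(y₂:ℂ)*c^4*(conj c) + ((2:ℂ)/9)*B*(conj B)^3*c^6 + (((-2):ℂ)/9)*B*(conj B)^3*c^7*(conj c) + ((-2):ℂ)*B^2*(conj E)*(y₁:ℂ)*(conj c)^3 + (2:ℂ)*B^2*(conj E)*(y₁:ℂ)*c*(conj c)^4 + ((-1):ℂ)*B^2*(conj D)*(conj E)*(conj c)^2 + (1:ℂ)*B^2*(conj D)*(conj E)*c*(conj c)^3 + ((1:ℂ)/3)*B^2*(conj B)*(y₂:ℂ)*(conj c)^3 + (((-1):ℂ)/3)*B^2*(conj B)*(y₂:ℂ)*c*(conj c)^4 + (((-2):ℂ)/9)*B^3*(conj B)*(conj c)^6 + ((2:ℂ)/9)*B^3*(conj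 B)*c*(conj c)^7 + (((-10):ℂ)/3)*(conj A)*(conj B)*(y₁:ℂ)^2*c^4 + ((10:ℂ)/3)*(conj A)*(conj B)*(y₁:ℂ)^2*c^5*(conj c) + (((-1):ℂ)/3)*(conj A)*(conj B)*E*(y₁:ℂ)*c^2*(conj c) + ((1:ℂ)/3)*(conj A)*(conj B)*E*(y₁:ℂ)*c^3*(conj c)^2 + ((-1):ℂ)*(conj A)*(conj B)*E^2*(conj c)^2 + (1:ℂ)*(conj A)*(conj B)*E^2*c*(conj c)^3 + (((-11):ℂ)/3)*(conj A)*(conj B)*D*(y₁:ℂ)*c^3 + ((11:ℂ)/3)*(conj A)*(conj B)*D*(y₁:ℂ)*c^4*(conj c) + ((-1):ℂ)*(conj A)*(conj B)*D^2*c^2 + (1:ℂ)*(conj A)*(conj B)*D^2*c^3*(conj c) + ((-2):ℂ)*(conj A)*B*(y₁:ℂ)^2*(conj c)^2 + (6:ℂ)*(conj A)*B*(y₁:ℂ)^2*c*(conj c)^3 + ((-4):ℂ)*(conj A)*B*(y₁:ℂ)^2*c^2*(conj c)^4 + (1:ℂ)*(conj A)*B*(conj E)*(y₁:ℂ)*c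 + ((-1):ℂ)*(conj A)*B*(conj E)*(y₁:ℂ)*c^2*(conj c) + ((-1):ℂ)*(conj A)*B*E*(conj E)*(conj c)^2 + (1:ℂ)*(conj A)*B*E*(conj E)*c*(conj c)^3 + ((-1):ℂ)*(conj A)*B*(conj D)*(y₁:ℂ)*(conj c) + (3:ℂ)*(conj A)*B*(conj D)*(y₁:ℂ)*c*(conj c)^2 + ((-2):ℂ)*(conj A)*B*(conj D)*(y₁:ℂ)*c^2*(conj c)^3 + (2:ℂ)*(conj A)*B*D*(y₁:ℂ)*(conj c)^3 + ((-2):ℂ)*(conj A)*B*D*(y₁:ℂ)*c*(conj c)^4 + (1:ℂ)*(conj A)*B*D*(conj D)*(conj c)^2 + ((-1):ℂ)*(conj A)*B*D*(conj D)*c*(conj c)^3 + (1:ℂ)*(conj A)*B*(conj B)*(y₂:ℂ)*c + ((-1):ℂ)*(conj A)*B*(conj B)*(y₂:ℂ)*c^2*(conj c) + (2:ℂ)*(conj A)^2*(y₁:ℂ)^2*c^2 + ((-2):ℂ)*(conj A)^2*(y₁:ℂ)^2*c^3*(conj c) + ((-1):ℂ)*(conj A)^2*E*(y₁:ℂ)*(conj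 c) + (3:ℂ)*(conj A)^2*E*(y₁:ℂ)*c*(conj c)^2 + ((-2):ℂ)*(conj A)^2*E*(y₁:ℂ)*c^2*(conj c)^3 + (1:ℂ)*(conj A)^2*D*(y₁:ℂ)*c + ((-1):ℂ)*(conj A)^2*D*(y₁:ℂ)*c^2*(conj c) + (1:ℂ)*(conj A)^2*D*E*(conj c)^2 + ((-1):ℂ)*(conj A)^2*D*E*c*(conj c)^3 + ((-2):ℂ)*(conj A)^2*B*(y₂:ℂ)*(conj c) + (2:ℂ)*(conj A)^2*B*(y₂:ℂ)*c*(conj c)^2 + ((-2):ℂ)*(conj A)^2*B*(conj B)*c^2 + (2:ℂ)*(conj A)^2*B*(conj B)*c^3*(conj c) + ((4:ℂ)/3)*(conj A)^2*B^2*(conj c)^4 + (((-4):ℂ)/3)*(conj A)^2*B^2*c*(conj c)^5 + (2:ℂ)*A*(conj B)*(y₁:ℂ)^2*c^2 + ((-6):ℂ)*A*(conj B)*(y₁:ℂ)^2*c^3*(conj c) + (4:ℂ)*A*(conj B)*(y₁:ℂ)^2*c^4*(conj c)^2 + ((-1):ℂ)*A*(conj B)*E*(y₁:ℂ)*(conj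 c) + (1:ℂ)*A*(conj B)*E*(y₁:ℂ)*c*(conj c)^2 + (1:ℂ)*A*(conj B)*E*(conj E)*c^2 + ((-1):ℂ)*A*(conj B)*E*(conj E)*c^3*(conj c) + ((-2):ℂ)*A*(conj B)*(conj D)*(y₁:ℂ)*c^3 + (2:ℂ)*A*(conj B)*(conj D)*(y₁:ℂ)*c^4*(conj c) + (1:ℂ)*A*(conj B)*D*(y₁:ℂ)*c + ((-3):ℂ)*A*(conj B)*D*(y₁:ℂ)*c^2*(conj c) + (2:ℂ)*A*(conj B)*D*(y₁:ℂ)*c^3*(conj c)^2 + ((-1):ℂ)*A*(conj B)*D*(conj D)*c^2 + (1:ℂ)*A*(conj B)*D*(conj D)*c^3*(conj c) + ((10:ℂ)/3)*A*B*(y₁:ℂ)^2*(conj c)^4 + (((-10):ℂ)/3)*A*B*(y₁:ℂ)^2*c*(conj c)^5 + ((1:ℂ)/3)*A*B*(conj E)*(y₁:ℂ)*c*(conj c)^2 + (((-1):ℂ)/3)*A*B*(conj E)*(y₁:ℂ)*c^2*(conj c)^3 + (1:ℂ)*A*B*(conj E)^2*c^2 + ((-1):ℂ)*A*B*(conj E)^2*c^3*(conj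 c) + ((11:ℂ)/3)*A*B*(conj D)*(y₁:ℂ)*(conj c)^3 + (((-11):ℂ)/3)*A*B*(conj D)*(y₁:ℂ)*c*(conj c)^4 + (1:ℂ)*A*B*(conj D)^2*(conj c)^2 + ((-1):ℂ)*A*B*(conj D)^2*c*(conj c)^3 + ((-1):ℂ)*A*B*(conj B)*(y₂:ℂ)*(conj c) + (1:ℂ)*A*B*(conj B)*(y₂:ℂ)*c*(conj c)^2 + ((-2):ℂ)*A*(conj A)*(conj E)*(y₁:ℂ)*c^3 + (2:ℂ)*A*(conj A)*(conj E)*(y₁:ℂ)*c^4*(conj c) + (2:ℂ)*A*(conj A)*E*(y₁:ℂ)*(conj c)^3 + ((-2):ℂ)*A*(conj A)*E*(y₁:ℂ)*c*(conj c)^4 + (1:ℂ)*A*(conj A)*(conj D)*E*(conj c)^2 + ((-1):ℂ)*A*(conj A)*(conj D)*E*c*(conj c)^3 + ((-1):ℂ)*A*(conj A)*D*(conj E)*c^2 + (1:ℂ)*A*(conj A)*D*(conj E)*c^3*(conj c) + ((1:ℂ)/3)*A*(conj A)*(conj B)*(y₂:ℂ)*c^3 + (((-1):ℂ)/3)*A*(conj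 A)*(conj B)*(y₂:ℂ)*c^4*(conj c) + (((-2):ℂ)/9)*A*(conj A)*(conj B)^2*c^6 + ((2:ℂ)/9)*A*(conj A)*(conj B)^2*c^7*(conj c) + (((-1):ℂ)/3)*A*(conj A)*B*(y₂:ℂ)*(conj c)^3 + ((1:ℂ)/3)*A*(conj A)*B*(y₂:ℂ)*c*(conj c)^4 + ((2:ℂ)/9)*A*(conj A)*B^2*(conj c)^6 + (((-2):ℂ)/9)*A*(conj A)*B^2*c*(conj c)^7 + (1:ℂ)*A*(conj A)^2*(y₂:ℂ)*c + ((-1):ℂ)*A*(conj A)^2*(y₂:ℂ)*c^2*(conj c) + (2:ℂ)*A*(conj A)^3*c^2 + ((-2):ℂ)*A*(conj A)^3*c^3*(conj c) + ((-2):ℂ)*A^2*(y₁:ℂ)^2*(conj c)^2 + (2:ℂ)*A^2*(y₁:ℂ)^2*c*(conj c)^3 + (1:ℂ)*A^2*(conj E)*(y₁:ℂ)*c + ((-3):ℂ)*A^2*(conj E)*(y₁:ℂ)*c^2*(conj c) + (2:ℂ)*A^2*(conj E)*(y₁:ℂ)*c^3*(conj c)^2 + ((-1):ℂ)*A^2*(conj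 D)*(y₁:ℂ)*(conj c) + (1:ℂ)*A^2*(conj D)*(y₁:ℂ)*c*(conj c)^2 + ((-1):ℂ)*A^2*(conj D)*(conj E)*c^2 + (1:ℂ)*A^2*(conj D)*(conj E)*c^3*(conj c) + (2:ℂ)*A^2*(conj B)*(y₂:ℂ)*c + ((-2):ℂ)*A^2*(conj B)*(y₂:ℂ)*c^2*(conj c) + (((-4):ℂ)/3)*A^2*(conj B)^2*c^4 + ((4:ℂ)/3)*A^2*(conj B)^2*c^5*(conj c) + (2:ℂ)*A^2*B*(conj B)*(conj c)^2 + ((-2):ℂ)*A^2*B*(conj B)*c*(conj c)^3 + ((-1):ℂ)*A^2*(conj A)*(y₂:ℂ)*(conj c) + (1:ℂ)*A^2*(conj A)*(y₂:ℂ)*c*(conj c)^2 + ((-2):ℂ)*A^3*(conj A)*(conj c)^2 + (2:ℂ)*A^3*(conj A)*c*(conj c)^3) * Complex.I_sq + ((2:ℂ)*(conj B)^2*E*(y₁:ℂ)*c^3 + (1:ℂ)*(conj B)^2*D*E*c^2 + ((4:ℂ)/3)*B*(conj B)*(conj E)*(y₁:ℂ)*c^3 + (((-4):ℂ)/3)*B*(conj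 B)*E*(y₁:ℂ)*(conj c)^3 + ((-1):ℂ)*B*(conj B)*(conj D)*E*(conj c)^2 + (1:ℂ)*B*(conj B)*D*(conj E)*c^2 + ((-2):ℂ)*B^2*(conj E)*(y₁:ℂ)*(conj c)^3 + ((-1):ℂ)*B^2*(conj D)*(conj E)*(conj c)^2 + (((-8):ℂ)/3)*(conj A)*(conj B)*(y₁:ℂ)^2*c^4 + ((-1):ℂ)*(conj A)*(conj B)*E^2*(conj c)^2 + (((-10):ℂ)/3)*(conj A)*(conj B)*D*(y₁:ℂ)*c^3 + ((-1):ℂ)*(conj A)*(conj B)*D^2*c^2 + ((-4):ℂ)*(conj A)*B*(y₁:ℂ)^2*(conj c)^2 + (4:ℂ)*(conj A)*B*(y₁:ℂ)^2*c*(conj c)^3 + ((-1):ℂ)*(conj A)*B*E*(conj E)*(conj c)^2 + ((-2):ℂ)*(conj A)*B*(conj D)*(y₁:ℂ)*(conj c) + (2:ℂ)*(conj A)*B*(conj D)*(y₁:ℂ)*c*(conj c)^2 + (2:ℂ)*(conj A)*B*D*(y₁:ℂ)*(conj c)^3 + (1:ℂ)*(conj A)*B*D*(conj D)*(conj c)^2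 + (2:ℂ)*(conj A)*B*(conj B)*(y₂:ℂ)*c + ((-2):ℂ)*(conj A)^2*E*(y₁:ℂ)*(conj c) + (2:ℂ)*(conj A)^2*E*(y₁:ℂ)*c*(conj c)^2 + (1:ℂ)*(conj A)^2*D*E*(conj c)^2 + (4:ℂ)*A*(conj B)*(y₁:ℂ)^2*c^2 + ((-4):ℂ)*A*(conj B)*(y₁:ℂ)^2*c^3*(conj c) + (1:ℂ)*A*(conj B)*E*(conj E)*c^2 + ((-2):ℂ)*A*(conj B)*(conj D)*(y₁:ℂ)*c^3 + (2:ℂ)*A*(conj B)*D*(y₁:ℂ)*c + ((-2):ℂ)*A*(conj B)*D*(y₁:ℂ)*c^2*(conj c) + ((-1):ℂ)*A*(conj B)*D*(conj D)*c^2 + ((8:ℂ)/3)*A*B*(y₁:ℂ)^2*(conj c)^4 + (1:ℂ)*A*B*(conj E)^2*c^2 + ((10:ℂ)/3)*A*B*(conj D)*(y₁:ℂ)*(conj c)^3 + (1:ℂ)*A*B*(conj D)^2*(conj c)^2 + ((-2):ℂ)*A*B*(conj B)*(y₂:ℂ)*(conj c) + ((-2):ℂ)*A*(conj A)*(conj E)*(y₁:ℂ)*c^3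 + (2:ℂ)*A*(conj A)*E*(y₁:ℂ)*(conj c)^3 + (1:ℂ)*A*(conj A)*(conj D)*E*(conj c)^2 + ((-1):ℂ)*A*(conj A)*D*(conj E)*c^2 + (2:ℂ)*A*(conj A)^2*(y₂:ℂ)*c + (2:ℂ)*A^2*(conj E)*(y₁:ℂ)*c + ((-2):ℂ)*A^2*(conj E)*(y₁:ℂ)*c^2*(conj c) + ((-1):ℂ)*A^2*(conj D)*(conj E)*c^2 + ((-2):ℂ)*A^2*(conj A)*(y₂:ℂ)*(conj c)) * hcd
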